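/- Let Π be a nonempty affine subspace of EuclideanSpace ℝ (Fin 3) whose direction is a 2-dimensional linear subspace (an affine plane), let s₀ be the orthogonal reflection of E³ across Π, let G be a group of isometries of E³ containing s₀, and let s₁ ∈ G. Then there is no point v ∈ E³ such that the stabilizer of v in G is trivial and dist v (s₁ v) = dist v (s₀ v) = dist (s₁ v) (s₀ v). Equivalently: if v has trivial stabilizer in G (so that s₀ v ≠ v), the triangle with vertices v, s₀ v, s₁ v cannot be equilateral, because equidistance of s₁ v from v and s₀ v forces s₁ v to lie on Π and hence s₀ (s₁ v) = s₁ v, contradicting the triviality of the stabilizer of s₁ v. -/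

import Mathlib

/-- If `s₀` is the orthogonal reflection of `E³` across an affine plane, `G` is a group of
isometries of `E³` containing `s₀`, and `s₁ ∈ G`, then there is no point `v` with trivial
stabilizer in `G` for which the triangle `v`, `s₀ v`, `s₁ v` is equilateral. -/
theorem no_uniform_snub_of_plane_reflection
    (plane : AffineSubspace ℝ (EuclideanSpace ℝ (Fin 3))) [Nonempty plane]
    (hdim : Module.finrank ℝ plane.direction = 2)
    (G : Subgroup (EuclideanSpace ℝ (Fin 3) ≃ᵢ EuclideanSpace ℝ (Fin 3)))
    (s₀ : EuclideanSpace ℝ (Fin 3) ≃ᵢ EuclideanSpace ℝ (Fin 3))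
    (hs₀ : ∀ x, s₀ x = EuclideanGeometry.reflection plane x)
    (hs₀G : s₀ ∈ G)
    (s₁ : EuclideanSpace ℝ (Fin 3) ≃ᵢ EuclideanSpace ℝ (Fin 3)) (hs₁G : s₁ ∈ G) :
    ¬ ∃ v : EuclideanSpace ℝ (Fin 3),
        (∀ g : EuclideanSpace ℝ (Fin 3) ≃ᵢ EuclideanSpace ℝ (Fin 3), g ∈ G → g v = v → g = 1) ∧
        dist v (s₁ v) = dist v (s₀ v) ∧
        dist v (s₀ v) = dist (s₁ v) (s₀ v) := by
  rintro ⟨v, hstab, h1, h2⟩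
  -- s₀ is not the identity
  have hne : plane ≠ ⊤ := by
    intro h
    rw [h, AffineSubspace.direction_top, finrank_top,
      finrank_euclideanSpace_fin] at hdim
    norm_num at hdim
  have hs0ne : s₀ ≠ 1 := by
    intro h
    obtain ⟨x, hx⟩ : ∃ x, x ∉ plane := by
      by_contra hc
      push_neg at hc
      exact hne (SetLike.ext fun x => ⟨fun _ => trivial, fun _ => hc x⟩)
    have hx' := hs₀ x
    rw [h] at hx'
    simp only [IsometryEquiv.coe_one, id_eq] at hx'
    exact hx ((EuclideanGeometry.reflection_eq_self_iff x).mp hx'.symm)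
  -- v ∉ plane
  have hv : v ∉ plane := fun hv =>
    hs0ne (hstab s₀ hs₀G (by rw [hs₀ v, EuclideanGeometry.reflection_eq_self_iff]; exact hv))
  set m : EuclideanSpace ℝ (Fin 3) :=
    (EuclideanGeometry.orthogonalProjection plane v : EuclideanSpace ℝ (Fin 3)) with hm
  have hmmem : m ∈ plane := (EuclideanGeometry.orthogonalProjection plane v).2
  set u : EuclideanSpace ℝ (Fin 3) := v - m with hu
  have huo : u ∈ plane.directionᗮ :=
    EuclideanGeometry.vsub_orthogonalProjection_mem_direction_orthogonal plane v
  have hune : u ≠ 0 := by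
    intro h
    apply hv
    have hvm : v = m := by rwa [hu, sub_eq_zero] at h
    rw [hvm]; exact hmmem
  set w : EuclideanSpace ℝ (Fin 3) := s₁ v with hw
  have hd : dist w v = dist w (s₀ v) := by rw [dist_comm w v, h1, h2]
  have hrv : s₀ v = (m - v) + m := by
    rw [hs₀ v, EuclideanGeometry.reflection_apply']
    rfl
  have hinner : inner ℝ u (w - m) = (0 : ℝ) := by
    have e1 : dist w v = ‖(w - m) - u‖ := by
      rw [dist_eq_norm]; congr 1; rw [hu]; abel
    have e2 : dist w (s₀ v) = ‖(w - m) + u‖ := by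
      rw [dist_eq_norm, hrv]; congr 1; rw [hu]; abel
    rw [e1, e2] at hd
    have hsq := congrArg (fun t : ℝ => t ^ 2) hd
    simp only [norm_sub_sq_real, norm_add_sq_real] at hsq
    have : inner ℝ (w - m) u = (0 : ℝ) := by linarith
    rwa [real_inner_comm] at this
  -- plane.direction = (ℝ ∙ u)ᗮ
  have hle : plane.direction ≤ (ℝ ∙ u)ᗮ :=
    le_trans (Submodule.le_orthogonal_orthogonal _)
      (Submodule.orthogonal_le ((Submodule.span_singleton_le_iff_mem _ _).mpr huo))
  have hfr : Module.finrank ℝ ((ℝ ∙ u)ᗮ) = 2 := by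
    have := Submodule.finrank_add_finrank_orthogonal (K := (ℝ ∙ u))
    rw [finrank_span_singleton hune, finrank_euclideanSpace_fin] at this
    omega
  have heq : plane.direction = (ℝ ∙ u)ᗮ :=
    Submodule.eq_of_le_of_finrank_eq hle (by rw [hdim, hfr])
  -- w ∈ plane
  have hwmem : w ∈ plane := by
    have hwm : w - m ∈ plane.direction := by
      rw [heq, Submodule.mem_orthogonal_singleton_iff_inner_right]
      exact hinner
    have := AffineSubspace.vadd_mem_of_mem_direction hwm hmmem
    simpa [vadd_eq_add, sub_add_cancel] using this
  -- so s₀ fixes w, giving the contradiction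
  have hfix : s₀ w = w := by
    rw [hs₀ w, EuclideanGeometry.reflection_eq_self_iff]; exact hwmem
  have hg : (s₁⁻¹ * s₀ * s₁) v = v := by
    simp only [IsometryEquiv.mul_apply]
    rw [← hw, hfix, hw]
    exact s₁.symm_apply_apply v
  have := hstab _ (mul_mem (mul_mem (inv_mem hs₁G) hs₀G) hs₁G) hg
  have : s₀ = 1 := by
    have h' := congrArg (fun g => s₁ * g * s₁⁻¹) this
    simpa [mul_assoc] using h'
  exact hs0ne this
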